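/- Let Γ be a connected finite simple graph and let v_i, v_j be vertices with d(v_i, v_j) ≥ 3. Let K be a connected component of Γ \ S_i and Q a connected component of Γ \ S_j. If v_i ∉ Q and v_j ∉ K, then K ∩ Q = ∅. -/

import Mathlib

def gstar {V : Type*} (G : SimpleGraph V) (v : V) : Set V := {u | u = v ∨ G.Adj v u}

def IsCompOf {V : Type*} (G : SimpleGraph V) (s K : Set V) : Prop :=
  K.Nonempty ∧ K ⊆ s ∧ (G.induce K).Connected ∧
    ∀ K' : Set V, K ⊆ K' → K' ⊆ s → (G.induce K').Connected → K' = K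

lemma singleton_induce_connected {V : Type*} (G : SimpleGraph V) (p : V) :
    (G.induce {p}).Connected := by
  have : Nonempty ({p} : Set V) := ⟨⟨p, rfl⟩⟩
  exact ⟨fun a b => by rw [Subtype.ext (a.2.trans b.2.symm)]⟩

lemma walk_cross {V : Type*} {G : SimpleGraph V} {K : Set V} :
    ∀ {a b : V}, G.Walk a b → a ∉ K → b ∈ K →
      ∃ p k, p ∉ K ∧ k ∈ K ∧ G.Adj p k := by
  intro a b w
  induction w with
  | nil => intro h1 h2; exact absurd h2 h1
  | @cons u v c h w ih =>
    intro hu hc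
    by_cases hv : v ∈ K
    · exact ⟨u, v, hu, hv, h⟩
    · exact ih hv hc

theorem stmt1 {V : Type*} [Fintype V] (G : SimpleGraph V) (hconn : G.Connected)
    (i j : V) (hd : 3 ≤ G.dist i j)
    (K Q : Set V)
    (hK : IsCompOf G ((gstar G i)ᶜ) K) (hQ : IsCompOf G ((gstar G j)ᶜ) Q)
    (hiQ : i ∉ Q) (hjK : j ∉ K) :
    K ∩ Q = ∅ := by
  obtain ⟨hKne, hKsub, hKconn, hKmax⟩ := hK
  obtain ⟨hQne, hQsub, hQconn, hQmax⟩ := hQ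
  have hne : i ≠ j := by
    rintro rfl; simp [SimpleGraph.dist_self] at hd
  have hnadj : ¬ G.Adj i j := by
    intro h
    have := G.dist_le (SimpleGraph.Walk.cons h SimpleGraph.Walk.nil)
    simp at this; omega
  by_contra hcon
  obtain ⟨x, hxK, hxQ⟩ := Set.nonempty_iff_ne_empty.mpr hcon
  -- i ∉ gstar j, j ∉ gstar i
  have hij : i ∉ gstar G j := by
    rintro (h | h)
    · exact hne h
    · exact hnadj h.symm
  have hji : j ∉ gstar G i := by
    rintro (h | h)
    · exact hne h.symm
    · exact hnadj h
  -- Q ⊆ (gstar G i)ᶜ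
  have hQi : Q ⊆ (gstar G i)ᶜ := by
    intro u hu
    rintro (rfl | hadj)
    · exact hiQ hu
    · have hconn' : (G.induce ({i} ∪ Q)).Connected :=
        SimpleGraph.connected_induce_union (singleton_induce_connected G i).preconnected
          hQconn.preconnected rfl hu hadj
      have hsub' : ({i} ∪ Q : Set V) ⊆ (gstar G j)ᶜ := by
        rintro v (rfl | hv)
        · exact hij
        · exact hQsub hv
      have := hQmax _ Set.subset_union_right hsub' hconn'
      exact hiQ (this ▸ Set.mem_union_left Q rfl)
  -- K ⊆ (gstar G j)ᶜ
  have hKj : K ⊆ (gstar G j)ᶜ := by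
    intro u hu
    rintro (rfl | hadj)
    · exact hjK hu
    · have hconn' : (G.induce ({j} ∪ K)).Connected :=
        SimpleGraph.connected_induce_union (singleton_induce_connected G j).preconnected
          hKconn.preconnected rfl hu hadj
      have hsub' : ({j} ∪ K : Set V) ⊆ (gstar G i)ᶜ := by
        rintro v (rfl | hv)
        · exact hji
        · exact hKsub hv
      have := hKmax _ Set.subset_union_right hsub' hconn'
      exact hjK (this ▸ Set.mem_union_left K rfl)
  -- K = Q
  have hUconn : (G.induce (K ∪ Q)).Connected :=
    SimpleGraph.induce_union_connected hKconn.preconnected hQconn.preconnected ⟨x, hxK, hxQ⟩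
  have hUK : K ∪ Q = K :=
    hKmax _ Set.subset_union_left (Set.union_subset hKsub hQi) hUconn
  have hUQ : K ∪ Q = Q :=
    hQmax _ Set.subset_union_right (Set.union_subset hKj hQsub) hUconn
  have hKQ : K = Q := hUK ▸ hUQ
  -- walk from i to x, crossing edge
  have hiK : i ∉ K := fun h => hKsub h (Or.inl rfl)
  obtain ⟨w⟩ := hconn.preconnected i x
  obtain ⟨p, k, hpK, hkK, hadj⟩ := walk_cross w hiK hxK
  -- p ∈ gstar G i
  have hpi : p ∈ gstar G i := by
    by_contra hp
    have hconn' : (G.induce ({p} ∪ K)).Connected :=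
      SimpleGraph.connected_induce_union (singleton_induce_connected G p).preconnected
        hKconn.preconnected rfl hkK hadj
    have hsub' : ({p} ∪ K : Set V) ⊆ (gstar G i)ᶜ := by
      rintro v (rfl | hv)
      · exact hp
      · exact hKsub hv
    have := hKmax _ Set.subset_union_right hsub' hconn'
    exact hpK (this ▸ Set.mem_union_left K rfl)
  -- p ∈ gstar G j
  have hpj : p ∈ gstar G j := by
    by_contra hp
    have hconn' : (G.induce ({p} ∪ Q)).Connected :=
      SimpleGraph.connected_induce_union (singleton_induce_connected G p).preconnected
        hQconn.preconnected rfl (hKQ ▸ hkK) hadj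
    have hsub' : ({p} ∪ Q : Set V) ⊆ (gstar G j)ᶜ := by
      rintro v (rfl | hv)
      · exact hp
      · exact hQsub hv
    have := hQmax _ Set.subset_union_right hsub' hconn'
    have hpQ : p ∈ Q := this ▸ Set.mem_union_left Q rfl
    rw [hKQ] at hpK
    exact hpK hpQ
  -- derive dist i j ≤ 2
  rcases hpi with rfl | hip
  · rcases hpj with rfl | hjp
    · exact hne rfl
    · exact hnadj hjp.symm
  · rcases hpj with rfl | hjp
    · exact hnadj hip
    · have := G.dist_le (SimpleGraph.Walk.cons hip
        (SimpleGraph.Walk.cons hjp.symm SimpleGraph.Walk.nil))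
      simp at this; omega
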